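/- Let Y be an integrable real random variable whose law on ℝ has a density function f with respect to Lebesgue measure, let m₀ ∈ ℝ be a median of Y (ℙ(Y ≤ m₀) = 1/2), and let m ∈ ℝ. Suppose there are constants 0 < c₁ ≤ c₂ such that c₁ ≤ f(t) ≤ c₂ for Lebesgue-almost every t between m₀ and m (i.e., on the interval [min(m₀,m), max(m₀,m)]). Then c₁ (m − m₀)² ≤ E[|Y − m|] − E[|Y − m₀|] ≤ c₂ (m − m₀)². -/

import Mathlib

open MeasureTheory

/-- Sandwich lemma: integrating a nonnegative indicator-supported function against a
measure with density bounded between `c₁` and `c₂` on a superset of its support. -/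
lemma mad_aux_sandwich (ν : Measure ℝ) (f : ℝ → ℝ)
    (hdens : ν = MeasureTheory.volume.withDensity (fun t => ENNReal.ofReal (f t)))
    (u S : Set ℝ) (hS : MeasurableSet S) (hSu : S ⊆ u)
    (c₁ c₂ : ℝ) (hc₁ : 0 ≤ c₁) (hc₂ : 0 ≤ c₂)
    (hbound : ∀ᵐ t ∂(MeasureTheory.volume.restrict u), c₁ ≤ f t ∧ f t ≤ c₂)
    (h : ℝ → ℝ) (hmeas : Measurable h) (hpos : ∀ y, 0 ≤ S.indicator h y)
    (hintS : IntegrableOn h S volume) :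
    c₁ * (∫ y in S, h y) ≤ (∫ y, S.indicator h y ∂ν) ∧
      (∫ y, S.indicator h y ∂ν) ≤ c₂ * (∫ y in S, h y) := by
  have hposS : 0 ≤ᶠ[ae (volume.restrict S)] h := by
    filter_upwards [ae_restrict_mem hS] with y hy
    have := hpos y
    rwa [Set.indicator_of_mem hy] at this
  have hIpos : 0 ≤ ∫ y in S, h y := integral_nonneg_of_ae hposS
  have key : ∀ (c : ℝ) (T : Set ℝ), MeasurableSet T → T ⊆ u →
      (∀ᵐ t ∂(volume.restrict u), c ≤ f t) →
      ENNReal.ofReal c * volume T ≤ ν T := by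
    intro c T hT hTu hb
    rw [hdens, withDensity_apply _ hT, ← setLIntegral_const T (ENNReal.ofReal c)]
    refine lintegral_mono_ae ?_
    filter_upwards [ae_restrict_of_ae_restrict_of_subset hTu hb] with t ht
    exact ENNReal.ofReal_le_ofReal ht
  have key2 : ∀ (c : ℝ) (T : Set ℝ), MeasurableSet T → T ⊆ u →
      (∀ᵐ t ∂(volume.restrict u), f t ≤ c) →
      ν T ≤ ENNReal.ofReal c * volume T := by
    intro c T hT hTu hb
    rw [hdens, withDensity_apply _ hT, ← setLIntegral_const T (ENNReal.ofReal c)]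
    refine lintegral_mono_ae ?_
    filter_upwards [ae_restrict_of_ae_restrict_of_subset hTu hb] with t ht
    exact ENNReal.ofReal_le_ofReal ht
  have hle1 : (ENNReal.ofReal c₁) • (volume.restrict S) ≤ ν.restrict S := by
    rw [Measure.le_iff]
    intro T hT
    rw [Measure.smul_apply, Measure.restrict_apply hT, Measure.restrict_apply hT, smul_eq_mul]
    exact key c₁ (T ∩ S) (hT.inter hS) ((Set.inter_subset_right).trans hSu)
      (hbound.mono fun t ht => ht.1)
  have hle2 : ν.restrict S ≤ (ENNReal.ofReal c₂) • (volume.restrict S) := by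
    rw [Measure.le_iff]
    intro T hT
    rw [Measure.smul_apply, Measure.restrict_apply hT, Measure.restrict_apply hT, smul_eq_mul]
    exact key2 c₂ (T ∩ S) (hT.inter hS) ((Set.inter_subset_right).trans hSu)
      (hbound.mono fun t ht => ht.2)
  have hlam : ∫⁻ y in S, ENNReal.ofReal (h y) ∂volume = ENNReal.ofReal (∫ y in S, h y) :=
    (ofReal_integral_eq_lintegral_ofReal hintS hposS).symm
  have hindic : (∫ y, S.indicator h y ∂ν)
      = (∫⁻ y in S, ENNReal.ofReal (h y) ∂ν).toReal := by
    rw [integral_eq_lintegral_of_nonneg_ae (Filter.Eventually.of_forall hpos)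
      ((hmeas.indicator hS).aestronglyMeasurable)]
    congr 1
    rw [← lintegral_indicator hS]
    refine lintegral_congr fun y => ?_
    by_cases hy : y ∈ S <;> simp [Set.indicator_of_mem, Set.indicator_of_notMem, hy]
  have hlow : ENNReal.ofReal (c₁ * ∫ y in S, h y) ≤ ∫⁻ y in S, ENNReal.ofReal (h y) ∂ν := by
    rw [ENNReal.ofReal_mul hc₁, ← hlam, ← smul_eq_mul, ← lintegral_smul_measure]
    exact lintegral_mono' hle1 le_rfl
  have hhigh : (∫⁻ y in S, ENNReal.ofReal (h y) ∂ν) ≤ ENNReal.ofReal (c₂ * ∫ y in S, h y) := by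
    rw [ENNReal.ofReal_mul hc₂, ← hlam, ← smul_eq_mul, ← lintegral_smul_measure]
    exact lintegral_mono' hle2 le_rfl
  have hfin : (∫⁻ y in S, ENNReal.ofReal (h y) ∂ν) ≠ ⊤ :=
    ne_top_of_le_ne_top ENNReal.ofReal_ne_top hhigh
  constructor
  · rw [hindic]
    exact (ENNReal.ofReal_le_iff_le_toReal hfin).mp hlow
  · rw [hindic]
    exact ENNReal.toReal_le_of_le_ofReal (mul_nonneg hc₂ hIpos) hhigh

/-- Verification of the Lipschitz risk condition (Assumption A3) for the MAD loss
(Section 2.2 of the paper): if `Y` has a density bounded between `c₁` and `c₂` on the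
interval between a median `m₀` and a prediction `m`, then the excess MAD risk is
sandwiched between `c₁ (m − m₀)²` and `c₂ (m − m₀)²`. -/
theorem mad_lipschitz_risk
    {Ω : Type*} [MeasurableSpace Ω] (μpr : Measure Ω) [IsProbabilityMeasure μpr]
    (Y : Ω → ℝ) (hY : Measurable Y) (hint : Integrable Y μpr)
    (f : ℝ → ℝ)
    (hdensity : Measure.map Y μpr
      = MeasureTheory.volume.withDensity (fun t => ENNReal.ofReal (f t)))
    (m₀ : ℝ) (hmed : μpr {ω | Y ω ≤ m₀} = 1 / 2)
    (m : ℝ) (c₁ c₂ : ℝ) (hc₁ : 0 < c₁) (hc₁₂ : c₁ ≤ c₂)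
    (hbound : ∀ᵐ t ∂(MeasureTheory.volume.restrict (Set.uIcc m₀ m)),
      c₁ ≤ f t ∧ f t ≤ c₂) :
    c₁ * (m - m₀) ^ 2 ≤ (∫ ω, |Y ω - m| ∂μpr) - (∫ ω, |Y ω - m₀| ∂μpr) ∧
    (∫ ω, |Y ω - m| ∂μpr) - (∫ ω, |Y ω - m₀| ∂μpr) ≤ c₂ * (m - m₀) ^ 2 := by
  set ν : Measure ℝ := Measure.map Y μpr with hν
  have hprob : IsProbabilityMeasure ν := Measure.isProbabilityMeasure_map hY.aemeasurable
  have hatom : ∀ a : ℝ, ν {a} = 0 := by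
    intro a
    rw [hdensity, withDensity_apply _ (measurableSet_singleton a)]
    exact setLIntegral_measure_zero _ _ (measure_singleton a)
  have hIic : ν (Set.Iic m₀) = 1/2 := by
    rw [hν, Measure.map_apply hY measurableSet_Iic]
    exact hmed
  have hIio : ν (Set.Iio m₀) = 1/2 := by
    rw [← Set.Iic_diff_right, measure_diff_null (hatom m₀)]
    exact hIic
  have hgmeas : Measurable (fun y : ℝ => |y - m| - |y - m₀|) :=
    ((measurable_id.sub_const m).abs.sub (measurable_id.sub_const m₀).abs)
  have int1 : Integrable (fun ω => |Y ω - m|) μpr := (hint.sub (integrable_const m)).abs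
  have int2 : Integrable (fun ω => |Y ω - m₀|) μpr := (hint.sub (integrable_const m₀)).abs
  have htrans : (∫ ω, |Y ω - m| ∂μpr) - (∫ ω, |Y ω - m₀| ∂μpr)
      = ∫ y, (|y - m| - |y - m₀|) ∂ν := by
    rw [integral_map hY.aemeasurable hgmeas.aestronglyMeasurable, integral_sub int1 int2]
  set r : ℝ → ℝ := fun y => (m - m₀) * (2 * (Set.Iio m₀).indicator (fun _ => (1:ℝ)) y - 1)
    with hr
  have hrint : Integrable r ν := by
    apply Integrable.const_mul
    exact (((integrable_const (1:ℝ)).indicator measurableSet_Iio).const_mul 2).sub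
      (integrable_const 1)
  have hrzero : ∫ y, r y ∂ν = 0 := by
    rw [hr]
    simp only
    rw [integral_const_mul, integral_sub
      (((integrable_const (1:ℝ)).indicator measurableSet_Iio).const_mul 2)
      (integrable_const 1), integral_const_mul, integral_indicator_const _ measurableSet_Iio,
      measureReal_def, hIio, integral_const]
    simp [ENNReal.toReal_div]
  rcases le_total m₀ m with hle | hle
  · -- case m₀ ≤ m
    set S : Set ℝ := Set.Icc m₀ m with hSdef
    set h : ℝ → ℝ := fun y => 2*(m - y) with hhdef
    have hSmeas : MeasurableSet S := measurableSet_Icc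
    have hhmeas : Measurable h := (measurable_const.sub measurable_id).const_mul 2
    have hkey : ∀ y : ℝ, |y - m| - |y - m₀| = S.indicator h y + r y := by
      intro y
      simp only [hr, hSdef, hhdef, Set.indicator_apply, Set.mem_Icc, Set.mem_Iio]
      split_ifs with hA hB hB
      · linarith [hA.1]
      · rw [abs_of_nonpos (by linarith [hA.2]), abs_of_nonneg (by linarith [hA.1])]; ring
      · rw [abs_of_nonpos (by linarith), abs_of_nonpos (by linarith)]; ring
      · push_neg at hA hB
        have h3 : m < y := hA hB
        rw [abs_of_nonneg (by linarith), abs_of_nonneg (by linarith)]; ring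
    have hpos : ∀ y, 0 ≤ S.indicator h y := by
      intro y
      by_cases hy : y ∈ S
      · rw [Set.indicator_of_mem hy, hhdef]
        have := (Set.mem_Icc.mp hy).2
        simp only
        linarith
      · rw [Set.indicator_of_notMem hy]
    have hindint : Integrable (S.indicator h) ν := by
      refine Integrable.mono' (integrable_const (2*(m - m₀)))
        ((hhmeas.indicator hSmeas).aestronglyMeasurable)
        (Filter.Eventually.of_forall fun y => ?_)
      rw [Real.norm_eq_abs, abs_of_nonneg (hpos y)]
      by_cases hy : y ∈ S
      · rw [Set.indicator_of_mem hy, hhdef]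
        have := (Set.mem_Icc.mp hy).1
        simp only
        linarith
      · rw [Set.indicator_of_notMem hy]; linarith
    have hDint : ∫ y, (|y - m| - |y - m₀|) ∂ν = ∫ y, S.indicator h y ∂ν := by
      have hfe : (fun y : ℝ => |y - m| - |y - m₀|) = fun y => S.indicator h y + r y :=
        funext hkey
      rw [hfe, integral_add hindint hrint, hrzero, add_zero]
    have hval : ∫ y in S, h y = (m - m₀)^2 := by
      rw [hSdef, hhdef]
      rw [integral_Icc_eq_integral_Ioc, ← intervalIntegral.integral_of_le hle]
      have : (fun y : ℝ => 2*(m - y)) = fun y => 2*m - 2*y := by funext y; ring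
      rw [this, intervalIntegral.integral_sub intervalIntegrable_const
        (intervalIntegral.intervalIntegrable_id.const_mul 2), intervalIntegral.integral_const,
        intervalIntegral.integral_const_mul, integral_id, smul_eq_mul]
      ring
    have hintS : IntegrableOn h S volume := by
      rw [hSdef]
      exact (continuous_const.mul (continuous_const.sub continuous_id)).integrableOn_Icc
    obtain ⟨hl, hu⟩ := mad_aux_sandwich ν f hdensity (Set.uIcc m₀ m) S hSmeas
      (by rw [Set.uIcc_of_le hle]) c₁ c₂ hc₁.le (hc₁.le.trans hc₁₂) hbound h hhmeas hpos hintS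
    rw [hval] at hl hu
    rw [htrans, hDint]
    exact ⟨hl, hu⟩
  · -- case m ≤ m₀
    set S : Set ℝ := Set.Ico m m₀ with hSdef
    set h : ℝ → ℝ := fun y => 2*(y - m) with hhdef
    have hSmeas : MeasurableSet S := measurableSet_Ico
    have hhmeas : Measurable h := (measurable_id.sub measurable_const).const_mul 2
    have hkey : ∀ y : ℝ, |y - m| - |y - m₀| = S.indicator h y + r y := by
      intro y
      simp only [hr, hSdef, hhdef, Set.indicator_apply, Set.mem_Ico, Set.mem_Iio]
      split_ifs with hA hB hB
      · rw [abs_of_nonneg (by linarith [hA.1]), abs_of_nonpos (by linarith [hA.2])]; ring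
      · exact absurd hA.2 hB
      · push_neg at hA
        have h3 : y < m := by
          by_contra hc; push_neg at hc; exact absurd (hA hc) (not_le.mpr hB)
        rw [abs_of_nonpos (by linarith), abs_of_nonpos (by linarith)]; ring
      · push_neg at hB
        rw [abs_of_nonneg (by linarith), abs_of_nonneg (by linarith)]; ring
    have hpos : ∀ y, 0 ≤ S.indicator h y := by
      intro y
      by_cases hy : y ∈ S
      · rw [Set.indicator_of_mem hy, hhdef]
        have := (Set.mem_Ico.mp hy).1
        simp only
        linarith
      · rw [Set.indicator_of_notMem hy]
    have hindint : Integrable (S.indicator h) ν := by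
      refine Integrable.mono' (integrable_const (2*(m₀ - m)))
        ((hhmeas.indicator hSmeas).aestronglyMeasurable)
        (Filter.Eventually.of_forall fun y => ?_)
      rw [Real.norm_eq_abs, abs_of_nonneg (hpos y)]
      by_cases hy : y ∈ S
      · rw [Set.indicator_of_mem hy, hhdef]
        have := (Set.mem_Ico.mp hy).2
        simp only
        linarith
      · rw [Set.indicator_of_notMem hy]; linarith
    have hDint : ∫ y, (|y - m| - |y - m₀|) ∂ν = ∫ y, S.indicator h y ∂ν := by
      have hfe : (fun y : ℝ => |y - m| - |y - m₀|) = fun y => S.indicator h y + r y :=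
        funext hkey
      rw [hfe, integral_add hindint hrint, hrzero, add_zero]
    have hval : ∫ y in S, h y = (m - m₀)^2 := by
      rw [hSdef, hhdef]
      rw [restrict_Ico_eq_restrict_Ioc, ← intervalIntegral.integral_of_le hle]
      have : (fun y : ℝ => 2*(y - m)) = fun y => 2*y - 2*m := by funext y; ring
      rw [this, intervalIntegral.integral_sub
        (intervalIntegral.intervalIntegrable_id.const_mul 2) intervalIntegrable_const,
        intervalIntegral.integral_const, intervalIntegral.integral_const_mul, integral_id,
        smul_eq_mul]
      ring
    have hintS : IntegrableOn h S volume := by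
      rw [hSdef]
      exact ((continuous_const.mul (continuous_id.sub continuous_const)).integrableOn_Icc).mono_set
        Set.Ico_subset_Icc_self
    obtain ⟨hl, hu⟩ := mad_aux_sandwich ν f hdensity (Set.uIcc m₀ m) S hSmeas
      (by rw [Set.uIcc_of_ge hle]; exact Set.Ico_subset_Icc_self) c₁ c₂ hc₁.le
      (hc₁.le.trans hc₁₂) hbound h hhmeas hpos hintS
    rw [hval] at hl hu
    rw [htrans, hDint]
    exact ⟨hl, hu⟩
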